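/- Let R > 0 and let y ∈ ℝ³ with 0 < ‖y‖ < R, and set ȳ = (R²/‖y‖²) y. Then the function x ↦ log(2R²/(R² − ⟨x, y⟩ + ‖y‖·‖x − ȳ‖)) is harmonic on the open ball {x : ‖x‖ < R}; that is, it is smooth there and its Laplacian (the sum of its second partial derivatives in x) vanishes identically on the ball. -/

import Mathlib

open Real
open scoped RealInnerProductSpace

/-- The Euclidean Laplacian in `ℝ³`: the sum of the pure second partial derivatives. -/
noncomputable def laplacian (f : EuclideanSpace ℝ (Fin 3) → ℝ)
    (x : EuclideanSpace ℝ (Fin 3)) : ℝ :=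
  ∑ i : Fin 3,
    fderiv ℝ (fun z => fderiv ℝ f z (EuclideanSpace.single i (1 : ℝ))) x
      (EuclideanSpace.single i (1 : ℝ))

namespace LTH

noncomputable abbrev E := EuclideanSpace ℝ (Fin 3)

noncomputable def cc (R : ℝ) (y : E) : E := (R ^ 2 / ‖y‖ ^ 2) • y
noncomputable def gg (R : ℝ) (y : E) (z : E) : ℝ := R ^ 2 - ⟪z, y⟫ + ‖y‖ * ‖z - cc R y‖
noncomputable def ff (R : ℝ) (y : E) (z : E) : ℝ := Real.log (2 * R ^ 2 / gg R y z)
noncomputable def phi (R : ℝ) (y : E) (i : Fin 3) (z : E) : ℝ :=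
  -(gg R y z)⁻¹ * (‖y‖ * (‖z - cc R y‖⁻¹ * (z i - cc R y i)) - y i)

section Facts
variable {R : ℝ} {y : E} (hR : 0 < R) (hy0 : 0 < ‖y‖) (hyR : ‖y‖ < R)
include hR hy0 hyR

omit hyR in
theorem norm_cc : ‖cc R y‖ = R ^ 2 / ‖y‖ := by
  rw [cc, norm_smul, Real.norm_eq_abs, abs_of_pos (by positivity)]
  field_simp

omit hR hyR in
theorem inner_y_cc : ⟪y, cc R y⟫ = R ^ 2 := by
  rw [cc, real_inner_smul_right, real_inner_self_eq_norm_sq]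
  field_simp

theorem sub_cc_ne {z : E} (hz : ‖z‖ < R) : z - cc R y ≠ 0 := by
  intro h
  have hz' : z = cc R y := sub_eq_zero.mp h
  have h3 : ‖cc R y‖ = R ^ 2 / ‖y‖ := norm_cc hR hy0
  rw [hz', h3] at hz
  rw [div_lt_iff₀ hy0] at hz
  nlinarith

theorem gg_pos {z : E} (hz : ‖z‖ < R) : 0 < gg R y z := by
  have h1 : ⟪z, y⟫ ≤ ‖z‖ * ‖y‖ := real_inner_le_norm z y
  have h2 : ‖cc R y‖ - ‖z‖ ≤ ‖z - cc R y‖ := by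
    have := norm_sub_norm_le (cc R y) z
    rw [norm_sub_rev] at this
    linarith [abs_le.mp (abs_norm_sub_norm_le (cc R y) z) |>.2]
  have h3 : ‖cc R y‖ = R ^ 2 / ‖y‖ := norm_cc hR hy0
  have h4 : ‖y‖ * ‖cc R y‖ = R ^ 2 := by rw [h3]; field_simp
  have h5 : 0 ≤ ‖z‖ := norm_nonneg z
  rw [gg]
  nlinarith [mul_lt_mul_of_pos_left hz hy0]

end Facts

theorem hasFDerivAt_norm_sub (c z : E) (hz : z - c ≠ 0) :
    HasFDerivAt (fun w => ‖w - c‖) (innerSL ℝ (‖z - c‖⁻¹ • (z - c))) z := by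
  have h1 : HasFDerivAt (fun w : E => w - c) (ContinuousLinearMap.id ℝ E) z :=
    (hasFDerivAt_id z).sub_const c
  have hpos : (0:ℝ) < ⟪z - c, z - c⟫ := by
    rw [real_inner_self_eq_norm_sq]; exact pow_pos (norm_pos_iff.mpr hz) 2
  have h2 := (h1.inner ℝ h1).sqrt hpos.ne'
  have hfun : (fun w : E => Real.sqrt ⟪w - c, w - c⟫) = fun w => ‖w - c‖ := by
    funext w
    rw [real_inner_self_eq_norm_sq, Real.sqrt_sq (norm_nonneg _)]
  rw [hfun] at h2
  refine h2.congr_fderiv ?_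
  ext v
  have hs : Real.sqrt ⟪z - c, z - c⟫ = ‖z - c‖ := by
    rw [real_inner_self_eq_norm_sq, Real.sqrt_sq (norm_nonneg _)]
  have hn : ‖z - c‖ ≠ 0 := norm_ne_zero_iff.mpr hz
  simp only [ContinuousLinearMap.smul_apply, ContinuousLinearMap.coe_comp',
    Function.comp_apply, ContinuousLinearMap.prod_apply, ContinuousLinearMap.id_apply,
    fderivInnerCLM_apply, innerSL_apply_apply, real_inner_smul_left, hs,
    real_inner_comm (z - c) v, smul_eq_mul]
  field_simp
  ring

theorem hasFDerivAt_gg (R : ℝ) (y : E) (z : E) (hz : z - cc R y ≠ 0) :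
    HasFDerivAt (gg R y)
      (innerSL ℝ ((‖y‖ * ‖z - cc R y‖⁻¹) • (z - cc R y) - y)) z := by
  have hin : HasFDerivAt (fun w : E => ⟪w, y⟫)
      ((fderivInnerCLM ℝ (z, y)).comp
        ((ContinuousLinearMap.id ℝ E).prod 0)) z :=
    (hasFDerivAt_id z).inner ℝ (hasFDerivAt_const y z)
  have h := ((hasFDerivAt_const (R ^ 2) z).sub hin).add
    ((hasFDerivAt_norm_sub (cc R y) z hz).const_mul ‖y‖)
  refine h.congr_fderiv ?_
  ext v
  simp only [ContinuousLinearMap.add_apply, ContinuousLinearMap.sub_apply,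
    ContinuousLinearMap.smul_apply, ContinuousLinearMap.coe_comp', Function.comp_apply,
    ContinuousLinearMap.prod_apply, ContinuousLinearMap.id_apply,
    ContinuousLinearMap.zero_apply, fderivInnerCLM_apply, innerSL_apply_apply,
    inner_sub_left, real_inner_smul_left, inner_zero_right, smul_eq_mul,
    real_inner_comm y v]
  ring

theorem hasFDerivAt_ff (R : ℝ) (y : E) (z : E) (hz : z - cc R y ≠ 0)
    (hg : 0 < gg R y z) (hR : 0 < R) :
    HasFDerivAt (ff R y)
      (innerSL ℝ ((-(gg R y z)⁻¹) • ((‖y‖ * ‖z - cc R y‖⁻¹) • (z - cc R y) - y))) z := by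
  have hinv : HasFDerivAt (fun w => (gg R y w)⁻¹)
      ((-(gg R y z ^ 2)⁻¹) • innerSL ℝ ((‖y‖ * ‖z - cc R y‖⁻¹) • (z - cc R y) - y)) z :=
    (hasDerivAt_inv hg.ne').comp_hasFDerivAt z (hasFDerivAt_gg R y z hz)
  have hmul := hinv.const_mul (2 * R ^ 2)
  have hne : 2 * R ^ 2 * (gg R y z)⁻¹ ≠ 0 := by positivity
  have hlog := hmul.log hne
  have hfun : (fun w => Real.log (2 * R ^ 2 * (gg R y w)⁻¹)) = ff R y := by
    funext w; rw [ff, div_eq_mul_inv]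
  rw [hfun] at hlog
  refine hlog.congr_fderiv ?_
  ext v
  simp only [ContinuousLinearMap.smul_apply, innerSL_apply_apply, real_inner_smul_left, smul_eq_mul]
  have h1 : gg R y z ≠ 0 := hg.ne'
  field_simp

theorem fderiv_ff_apply (R : ℝ) (y : E) (z : E) (hz : z - cc R y ≠ 0)
    (hg : 0 < gg R y z) (hR : 0 < R) (i : Fin 3) :
    fderiv ℝ (ff R y) z (EuclideanSpace.single i (1 : ℝ)) = phi R y i z := by
  rw [(hasFDerivAt_ff R y z hz hg hR).fderiv]
  simp only [innerSL_apply_apply, phi]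
  simp only [EuclideanSpace.inner_single_right, PiLp.smul_apply, PiLp.sub_apply,
    smul_eq_mul, conj_trivial, one_mul, PiLp.neg_apply]
  ring

theorem fderiv_phi_apply (R : ℝ) (y : E) (x : E) (hx : x - cc R y ≠ 0)
    (hg : 0 < gg R y x) (i : Fin 3) :
    fderiv ℝ (phi R y i) x (EuclideanSpace.single i (1 : ℝ)) =
      -‖y‖ * ((‖x - cc R y‖)⁻¹ - (x i - cc R y i) ^ 2 * (‖x - cc R y‖ ^ 3)⁻¹) * (gg R y x)⁻¹
        + (‖y‖ * (x i - cc R y i) * (‖x - cc R y‖)⁻¹ - y i) ^ 2 * ((gg R y x) ^ 2)⁻¹ := by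
  have hr : (0:ℝ) < ‖x - cc R y‖ := norm_pos_iff.mpr hx
  have hA : HasFDerivAt (fun z : E => z i - cc R y i)
      (EuclideanSpace.proj i : E →L[ℝ] ℝ) x :=
    (EuclideanSpace.proj i : E →L[ℝ] ℝ).hasFDerivAt.sub_const _
  have hρinv := (hasDerivAt_inv hr.ne').comp_hasFDerivAt x (hasFDerivAt_norm_sub (cc R y) x hx)
  have hginv := (hasDerivAt_inv hg.ne').comp_hasFDerivAt x (hasFDerivAt_gg R y x hx)
  have t3 := (((hρinv.mul hA).const_mul ‖y‖).sub_const (y i))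
  have Φ : HasFDerivAt (phi R y i) _ x := hginv.neg.mul t3
  rw [Φ.fderiv]
  simp only [ContinuousLinearMap.add_apply, ContinuousLinearMap.smul_apply,
    ContinuousLinearMap.coe_smul', Pi.smul_apply, Function.comp_apply, Function.comp,
    ContinuousLinearMap.neg_apply, innerSL_apply_apply, smul_eq_mul,
    PiLp.proj_apply, EuclideanSpace.inner_single_right,
    EuclideanSpace.single_apply, PiLp.smul_apply, PiLp.sub_apply, Pi.neg_apply, conj_trivial,
    eq_self_iff_true, if_true]
  field_simp
  ring

theorem ff_smooth {R : ℝ} {y : E} (hR : 0 < R) (hy0 : 0 < ‖y‖) (hyR : ‖y‖ < R) :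
    ContDiffOn ℝ (⊤ : ℕ∞) (ff R y) {x : E | ‖x‖ < R} := by
  intro z hz
  have hz' : ‖z‖ < R := hz
  apply ContDiffAt.contDiffWithinAt
  have hgc : ContDiffAt ℝ (⊤ : ℕ∞) (gg R y) z := by
    have h1 : ContDiffAt ℝ (⊤ : ℕ∞) (fun w : E => ⟪w, y⟫) z :=
      (contDiff_id.inner ℝ contDiff_const).contDiffAt
    have h2 : ContDiffAt ℝ (⊤ : ℕ∞) (fun w : E => ‖w - cc R y‖) z :=
      ContDiffAt.norm ℝ (contDiffAt_id.sub contDiffAt_const) (sub_cc_ne hR hy0 hyR hz')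
    exact (contDiffAt_const.sub h1).add (contDiffAt_const.mul h2)
  have hgz := gg_pos hR hy0 hyR hz'
  have hq : ContDiffAt ℝ (⊤ : ℕ∞) (fun w => 2 * R ^ 2 / gg R y w) z :=
    contDiffAt_const.div hgc hgz.ne'
  exact (Real.contDiffAt_log.mpr (div_pos (by positivity) hgz).ne').comp z hq

end LTH

theorem log_term_harmonic (R : ℝ) (hR : 0 < R)
    (y : EuclideanSpace ℝ (Fin 3)) (hy0 : 0 < ‖y‖) (hyR : ‖y‖ < R) :
    ContDiffOn ℝ (⊤ : ℕ∞)
      (fun x : EuclideanSpace ℝ (Fin 3) =>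
        Real.log (2 * R ^ 2 / (R ^ 2 - ⟪x, y⟫ + ‖y‖ * ‖x - (R ^ 2 / ‖y‖ ^ 2) • y‖)))
      {x : EuclideanSpace ℝ (Fin 3) | ‖x‖ < R} ∧
    ∀ x : EuclideanSpace ℝ (Fin 3), ‖x‖ < R →
      laplacian
        (fun x : EuclideanSpace ℝ (Fin 3) =>
          Real.log (2 * R ^ 2 / (R ^ 2 - ⟪x, y⟫ + ‖y‖ * ‖x - (R ^ 2 / ‖y‖ ^ 2) • y‖)))
        x = 0 := by
  show ContDiffOn ℝ (⊤ : ℕ∞) (LTH.ff R y) _ ∧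
    ∀ x : EuclideanSpace ℝ (Fin 3), ‖x‖ < R → laplacian (LTH.ff R y) x = 0
  refine ⟨LTH.ff_smooth hR hy0 hyR, fun x hx => ?_⟩
  have hxc := LTH.sub_cc_ne hR hy0 hyR hx
  have hgx := LTH.gg_pos hR hy0 hyR hx
  have hr : (0:ℝ) < ‖x - LTH.cc R y‖ := norm_pos_iff.mpr hxc
  have hopen : IsOpen {z : LTH.E | ‖z‖ < R} := isOpen_lt continuous_norm continuous_const
  have hmem : ∀ᶠ z in nhds x, ‖z‖ < R :=
    Filter.eventually_of_mem (hopen.mem_nhds hx) fun z hz => hz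
  rw [laplacian]
  have hterm : ∀ i : Fin 3,
      fderiv ℝ (fun z => fderiv ℝ (LTH.ff R y) z (EuclideanSpace.single i (1:ℝ))) x
          (EuclideanSpace.single i (1:ℝ)) =
        -‖y‖ * ((‖x - LTH.cc R y‖)⁻¹ - (x i - LTH.cc R y i) ^ 2 * (‖x - LTH.cc R y‖ ^ 3)⁻¹)
            * (LTH.gg R y x)⁻¹
          + (‖y‖ * (x i - LTH.cc R y i) * (‖x - LTH.cc R y‖)⁻¹ - y i) ^ 2
            * ((LTH.gg R y x) ^ 2)⁻¹ := by
    intro i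
    have hev : (fun z => fderiv ℝ (LTH.ff R y) z (EuclideanSpace.single i (1:ℝ)))
        =ᶠ[nhds x] LTH.phi R y i :=
      hmem.mono fun z hz =>
        LTH.fderiv_ff_apply R y z (LTH.sub_cc_ne hR hy0 hyR hz) (LTH.gg_pos hR hy0 hyR hz) hR i
    rw [hev.fderiv_eq, LTH.fderiv_phi_apply R y x hxc hgx i]
  rw [Finset.sum_congr rfl fun i _ => hterm i]
  -- sum identities
  have S1 : ∑ i : Fin 3, (x i - LTH.cc R y i) ^ 2 = ‖x - LTH.cc R y‖ ^ 2 := by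
    rw [← real_inner_self_eq_norm_sq]
    simp only [PiLp.inner_apply, RCLike.inner_apply, conj_trivial, PiLp.sub_apply, sq]
  have S2 : ∑ i : Fin 3, y i * (x i - LTH.cc R y i) = ⟪x, y⟫ - R ^ 2 := by
    have h : ⟪y, x - LTH.cc R y⟫ = ⟪x, y⟫ - R ^ 2 := by
      rw [inner_sub_right, LTH.inner_y_cc hy0, real_inner_comm]
    rw [← h]
    simp [PiLp.inner_apply, RCLike.inner_apply, conj_trivial, PiLp.sub_apply]
    exact Finset.sum_congr rfl fun i _ => mul_comm _ _
  have S3 : ∑ i : Fin 3, (y i) ^ 2 = ‖y‖ ^ 2 := by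
    rw [← real_inner_self_eq_norm_sq]
    simp only [PiLp.inner_apply, RCLike.inner_apply, conj_trivial, sq]
  have expand : ∀ i : Fin 3,
      -‖y‖ * ((‖x - LTH.cc R y‖)⁻¹ - (x i - LTH.cc R y i) ^ 2 * (‖x - LTH.cc R y‖ ^ 3)⁻¹)
          * (LTH.gg R y x)⁻¹
        + (‖y‖ * (x i - LTH.cc R y i) * (‖x - LTH.cc R y‖)⁻¹ - y i) ^ 2
          * ((LTH.gg R y x) ^ 2)⁻¹
      = (-‖y‖ * (‖x - LTH.cc R y‖)⁻¹ * (LTH.gg R y x)⁻¹)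
        + (‖y‖ * (‖x - LTH.cc R y‖ ^ 3)⁻¹ * (LTH.gg R y x)⁻¹
            + ‖y‖ ^ 2 * ((‖x - LTH.cc R y‖) ^ 2)⁻¹ * ((LTH.gg R y x) ^ 2)⁻¹)
          * (x i - LTH.cc R y i) ^ 2
        + (-2 * ‖y‖ * (‖x - LTH.cc R y‖)⁻¹ * ((LTH.gg R y x) ^ 2)⁻¹)
          * (y i * (x i - LTH.cc R y i))
        + ((LTH.gg R y x) ^ 2)⁻¹ * (y i) ^ 2 := by
    intro i
    have h1 : ‖x - LTH.cc R y‖ ≠ 0 := hr.ne'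
    field_simp
    ring
  rw [Finset.sum_congr rfl fun i _ => expand i]
  have final : ∀ A B C D : ℝ,
      (∑ i : Fin 3, (A + B * (x i - LTH.cc R y i) ^ 2
          + C * (y i * (x i - LTH.cc R y i)) + D * (y i) ^ 2))
        = 3 * A + B * ‖x - LTH.cc R y‖ ^ 2 + C * (⟪x, y⟫ - R ^ 2) + D * ‖y‖ ^ 2 := by
    intro A B C D
    rw [Finset.sum_add_distrib, Finset.sum_add_distrib, Finset.sum_add_distrib,
      ← Finset.mul_sum, ← Finset.mul_sum, ← Finset.mul_sum, S1, S2, S3, Finset.sum_const]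
    simp only [Finset.card_univ, Fintype.card_fin, nsmul_eq_mul, Nat.cast_ofNat]
  rw [final]
  have hgg : LTH.gg R y x = R ^ 2 - ⟪x, y⟫ + ‖y‖ * ‖x - LTH.cc R y‖ := rfl
  rw [hgg]
  have h1 : ‖x - LTH.cc R y‖ ≠ 0 := hr.ne'
  have h2 : R ^ 2 - ⟪x, y⟫ + ‖y‖ * ‖x - LTH.cc R y‖ ≠ 0 := by rw [← hgg]; exact hgx.ne'
  set r := ‖x - LTH.cc R y‖ with hrdef
  set I : ℝ := ⟪x, y⟫ with hIdef
  set n := ‖y‖ with hndef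
  field_simp
  ring
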